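/- arXiv:2101.09438 — 6 statements merged into one kernel-verified Lean document; each statement's English description precedes it below -/
import Mathlib

section
/- Any interval [q,s] of natural numbers can be partitioned into two finite sequences of disjoint consecutive intervals (I_{−k},…,I_0) and (I_1,…,I_p), all belonging to the geometric cover and contained in [q,s], such that |I_{−i}|/|I_{−i+1}| ≤ 1/2 for all i ≥ 1 and |I_i|/|I_{i−1}| ≤ 1/2 for all i ≥ 2. -/
namespace Stmt1Aux

/-- the largest `k` with `2^k ∣ x` and `2^k ≤ s+1-x`. -/
def kk (s x : ℕ) : ℕ := Nat.findGreatest (fun k => 2 ^ k ∣ x ∧ 2 ^ k ≤ s + 1 - x) s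

/-- greedy sequence of left endpoints -/
def seq (s q : ℕ) : ℕ → ℕ
  | 0 => q
  | j + 1 => if seq s q j ≤ s then seq s q j + 2 ^ kk s (seq s q j) else seq s q j

theorem kk_spec {s x : ℕ} (h1 : 1 ≤ x) (h2 : x ≤ s) :
    2 ^ kk s x ∣ x ∧ 2 ^ kk s x ≤ s + 1 - x := by
  have h := Nat.findGreatest_spec (P := fun k => 2 ^ k ∣ x ∧ 2 ^ k ≤ s + 1 - x)
    (m := 0) (n := s) (Nat.zero_le s) ⟨one_dvd x, by omega⟩
  exact h

theorem kk_max {s x k : ℕ} (hd : 2 ^ k ∣ x) (hle : 2 ^ k ≤ s + 1 - x) : k ≤ kk s x := by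
  by_contra h
  push_neg at h
  have hp : k < 2 ^ k := Nat.lt_two_pow_self (n := k)
  have hks : k ≤ s := by omega
  exact Nat.findGreatest_is_greatest h hks ⟨hd, hle⟩

theorem seq_succ_of_le {s q j : ℕ} (h : seq s q j ≤ s) :
    seq s q (j + 1) = seq s q j + 2 ^ kk s (seq s q j) := by
  simp [seq, h]

theorem seq_ge (s q : ℕ) : ∀ j, q ≤ seq s q j := by
  intro j
  induction j with
  | zero => simp [seq]
  | succ j ih =>
    by_cases h : seq s q j ≤ s
    · rw [seq_succ_of_le h]
      have h2 : 1 ≤ 2 ^ kk s (seq s q j) := Nat.one_le_two_pow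
      omega
    · simpa [seq, h] using ih

theorem seq_le (s q : ℕ) (hq : 1 ≤ q) (hqs : q ≤ s) : ∀ j, seq s q j ≤ s + 1 := by
  intro j
  induction j with
  | zero => simp [seq]; omega
  | succ j ih =>
    by_cases h : seq s q j ≤ s
    · rw [seq_succ_of_le h]
      have h1 : 1 ≤ seq s q j := le_trans hq (seq_ge s q j)
      have := (kk_spec h1 h).2
      omega
    · simpa [seq, h] using ih

theorem seq_lb (s q : ℕ) (hq : 1 ≤ q) (hqs : q ≤ s) :
    ∀ j, q + j ≤ seq s q j ∨ seq s q j = s + 1 := by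
  intro j
  induction j with
  | zero => left; simp [seq]
  | succ j ih =>
    by_cases h : seq s q j ≤ s
    · left
      rw [seq_succ_of_le h]
      have h2 : 1 ≤ 2 ^ kk s (seq s q j) := Nat.one_le_two_pow
      rcases ih with ih | ih
      · omega
      · omega
    · right
      have := seq_le s q hq hqs j
      have heq : seq s q j = s + 1 := by omega
      simp [seq, h, heq]

theorem seq_exists (s q : ℕ) (hq : 1 ≤ q) (hqs : q ≤ s) : ∃ n, seq s q n = s + 1 := by
  refine ⟨s + 1 - q, ?_⟩
  rcases seq_lb s q hq hqs (s + 1 - q) with h | h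
  · have := seq_le s q hq hqs (s + 1 - q)
    omega
  · exact h

end Stmt1Aux

open Stmt1Aux in
/-- Any interval `[q,s]` of positive natural numbers can be partitioned into two
finite sequences of disjoint consecutive intervals
`(I_{-k}, …, I_0)` (indices `0, …, m0` of `L`) and `(I_1, …, I_p)`
(indices `m0+1, …, m-1` of `L`), all from the geometric cover and contained in
`[q,s]`, such that `|I_{-i}| / |I_{-i+1}| ≤ 1/2` for all `i ≥ 1` and
`|I_i| / |I_{i-1}| ≤ 1/2` for all `i ≥ 2`. -/
theorem stmt1 (q s : ℕ) (hq : 1 ≤ q) (hqs : q ≤ s) :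
    ∃ (m m0 : ℕ) (L : ℕ → ℕ × ℕ), 0 < m ∧ m0 < m ∧
      -- every interval belongs to the geometric cover
      (∀ j < m, ∃ i k : ℕ, 1 ≤ i ∧ (L j).1 = i * 2 ^ k ∧ (L j).2 = (i + 1) * 2 ^ k - 1) ∧
      -- the intervals are consecutive and partition [q, s]
      (L 0).1 = q ∧ (L (m - 1)).2 = s ∧
      (∀ j, j + 1 < m → (L (j + 1)).1 = (L j).2 + 1) ∧
      -- first sequence: each interval has length at most half of the next one
      (∀ j, j + 1 ≤ m0 →
        2 * ((L j).2 + 1 - (L j).1) ≤ (L (j + 1)).2 + 1 - (L (j + 1)).1) ∧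
      -- second sequence: each interval has length at most half of the previous one
      (∀ j, m0 + 1 ≤ j → j + 1 < m →
        2 * ((L (j + 1)).2 + 1 - (L (j + 1)).1) ≤ (L j).2 + 1 - (L j).1) := by
  set a : ℕ → ℕ := seq s q with ha
  have hex : ∃ n, a n = s + 1 := seq_exists s q hq hqs
  set m : ℕ := Nat.find hex with hm
  have hmspec : a m = s + 1 := Nat.find_spec hex
  have hlt : ∀ j < m, a j ≤ s := by
    intro j hj
    have h1 : a j ≤ s + 1 := seq_le s q hq hqs j
    have h2 : ¬ a j = s + 1 := Nat.find_min hex hj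
    omega
  have hm0lt : 0 < m := by
    rcases Nat.eq_zero_or_pos m with h | h
    · exfalso
      rw [h] at hmspec
      have : a 0 = q := rfl
      omega
    · exact h
  have hge : ∀ j, q ≤ a j := fun j => seq_ge s q j
  have hstep : ∀ j < m, a (j + 1) = a j + 2 ^ kk s (a j) := fun j hj =>
    seq_succ_of_le (hlt j hj)
  have hspec : ∀ j < m, 2 ^ kk s (a j) ∣ a j ∧ 2 ^ kk s (a j) ≤ s + 1 - a j := by
    intro j hj
    exact kk_spec (le_trans hq (hge j)) (hlt j hj)
  -- key lemma: once the exponent fails to increase, it strictly decreases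
  have hE : ∀ j, j + 2 < m → kk s (a (j + 1)) ≤ kk s (a j) →
      kk s (a (j + 2)) < kk s (a (j + 1)) := by
    intro j hj hle
    have hj0 : j < m := by omega
    have hj1 : j + 1 < m := by omega
    have e1 : a (j + 1) = a j + 2 ^ kk s (a j) := hstep j hj0
    have e2 : a (j + 2) = a (j + 1) + 2 ^ kk s (a (j + 1)) := hstep (j + 1) hj1
    have spec0 := hspec j hj0
    have spec2 := hspec (j + 2) hj
    by_contra hcon
    push_neg at hcon
    have hpow : 2 ^ kk s (a (j + 1)) ≤ 2 ^ kk s (a (j + 2)) :=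
      Nat.pow_le_pow_right (by norm_num) hcon
    have hsum : 2 ^ (kk s (a (j + 1)) + 1)
        = 2 ^ kk s (a (j + 1)) + 2 ^ kk s (a (j + 1)) := by ring
    have hbig : 2 ^ (kk s (a (j + 1)) + 1) ≤ s + 1 - a (j + 1) := by
      have h2 := spec2.2
      have h3 : 1 ≤ 2 ^ kk s (a (j + 2)) := Nat.one_le_two_pow
      omega
    set K : ℕ := kk s (a j) with hKdef
    set K' : ℕ := kk s (a (j + 1)) with hK'def
    set K'' : ℕ := kk s (a (j + 2)) with hK''def
    have hdvd : 2 ^ (K' + 1) ∣ a (j + 1) := by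
      rcases lt_or_eq_of_le hle with hlt' | heq
      · have h1 : 2 ^ (K' + 1) ∣ 2 ^ K := pow_dvd_pow 2 (by omega)
        rw [e1]
        exact dvd_add (dvd_trans h1 spec0.1) h1
      · rw [heq]
        by_cases hKd : 2 ^ (K + 1) ∣ a j
        · exfalso
          rw [heq] at hbig
          have h2 : 1 ≤ 2 ^ K := Nat.one_le_two_pow
          have hKle : 2 ^ (K + 1) ≤ s + 1 - a j := by
            have h4 : 1 ≤ 2 ^ K := Nat.one_le_two_pow
            omega
          have h5 := kk_max hKd hKle
          rw [← hKdef] at h5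
          omega
        · obtain ⟨t, ht⟩ := spec0.1
          rcases Nat.even_or_odd t with he | ho
          · exfalso
            obtain ⟨u, hu⟩ := he
            exact hKd ⟨u, by rw [ht, hu, pow_succ]; ring⟩
          · obtain ⟨u, hu⟩ := ho
            exact ⟨u + 1, by rw [e1, ht, hu, pow_succ]; ring⟩
    have h6 := kk_max hdvd hbig
    rw [← hK'def] at h6
    omega
  -- the peak index
  set Pm : ℕ → Prop := fun t => ∀ i < t, kk s (a i) < kk s (a (i + 1)) with hPm
  haveI hPmdec : DecidablePred Pm := fun t => Nat.decidableBallLT t _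
  set m0 : ℕ := Nat.findGreatest Pm (m - 1) with hm0
  have hm0le : m0 ≤ m - 1 := Nat.findGreatest_le (m - 1)
  have hPm0 : Pm m0 := by
    apply Nat.findGreatest_spec (P := Pm) (Nat.zero_le _)
    intro i hi
    exact absurd hi (Nat.not_lt_zero i)
  have hbase : m0 + 1 < m → kk s (a (m0 + 1)) ≤ kk s (a m0) := by
    intro hlt'
    by_contra hcon
    push_neg at hcon
    have h1 : Nat.findGreatest Pm (m - 1) < m0 + 1 := by rw [← hm0]; omega
    have hgr : ¬ Pm (m0 + 1) :=
      Nat.findGreatest_is_greatest h1 (by omega)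
    apply hgr
    intro i hi
    rcases Nat.lt_or_ge i m0 with h | h
    · exact hPm0 i h
    · have hieq : i = m0 := by omega
      rw [hieq]; exact hcon
  have hphase2 : ∀ j, m0 + 1 ≤ j → j + 1 < m → kk s (a (j + 1)) < kk s (a j) := by
    intro j hj
    induction j, hj using Nat.le_induction with
    | base =>
      intro h
      exact hE m0 (by omega) (hbase (by omega))
    | succ j hj ih =>
      intro h
      exact hE j (by omega) (le_of_lt (ih (by omega)))
  refine ⟨m, m0, fun j => (a j, a (j + 1) - 1), hm0lt, by omega, ?_, ?_, ?_, ?_, ?_, ?_⟩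
  · -- cover membership
    intro j hj
    obtain ⟨i, hi⟩ := hspec j hj |>.1
    refine ⟨i, kk s (a j), ?_, ?_, ?_⟩
    · have h1 : 1 ≤ a j := le_trans hq (hge j)
      rcases Nat.eq_zero_or_pos i with h | h
      · rw [h, mul_zero] at hi; omega
      · exact h
    · show a j = i * 2 ^ kk s (a j)
      rw [mul_comm]; exact hi
    · show a (j + 1) - 1 = (i + 1) * 2 ^ kk s (a j) - 1
      have e1 := hstep j hj
      have hmul : (i + 1) * 2 ^ kk s (a j) = 2 ^ kk s (a j) * i + 2 ^ kk s (a j) := by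
        ring
      omega
  · rfl
  · have h1 : m - 1 + 1 = m := by omega
    show a (m - 1 + 1) - 1 = s
    rw [h1, hmspec]
    omega
  · intro j hj
    have h1 : q ≤ a (j + 1) := hge (j + 1)
    show a (j + 1) = a (j + 1) - 1 + 1
    omega
  · -- phase 1
    intro j hj
    have hj1 : j + 1 < m := by omega
    have hj0 : j < m := by omega
    have e1 : a (j + 1) = a j + 2 ^ kk s (a j) := hstep j hj0
    have e2 : a (j + 2) = a (j + 1) + 2 ^ kk s (a (j + 1)) := hstep (j + 1) hj1
    have hk : kk s (a j) < kk s (a (j + 1)) := hPm0 j (by omega)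
    have hpow : 2 ^ (kk s (a j) + 1) ≤ 2 ^ kk s (a (j + 1)) :=
      Nat.pow_le_pow_right (by norm_num) (by omega)
    have hsum : 2 ^ (kk s (a j) + 1) = 2 ^ kk s (a j) + 2 ^ kk s (a j) := by ring
    have h1 : q ≤ a (j + 1) := hge (j + 1)
    have h2 : q ≤ a (j + 2) := hge (j + 2)
    have hp0 : 1 ≤ 2 ^ kk s (a j) := Nat.one_le_two_pow
    have hp1 : 1 ≤ 2 ^ kk s (a (j + 1)) := Nat.one_le_two_pow
    show 2 * (a (j + 1) - 1 + 1 - a j) ≤ a (j + 2) - 1 + 1 - a (j + 1)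
    omega
  · -- phase 2
    intro j hjm0 hj1
    have hj0 : j < m := by omega
    have e1 : a (j + 1) = a j + 2 ^ kk s (a j) := hstep j hj0
    have e2 : a (j + 2) = a (j + 1) + 2 ^ kk s (a (j + 1)) := hstep (j + 1) hj1
    have hk : kk s (a (j + 1)) < kk s (a j) := hphase2 j hjm0 hj1
    have hpow : 2 ^ (kk s (a (j + 1)) + 1) ≤ 2 ^ kk s (a j) :=
      Nat.pow_le_pow_right (by norm_num) (by omega)
    have hsum : 2 ^ (kk s (a (j + 1)) + 1)
        = 2 ^ kk s (a (j + 1)) + 2 ^ kk s (a (j + 1)) := by ring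
    have h1 : q ≤ a (j + 1) := hge (j + 1)
    have h2 : q ≤ a (j + 2) := hge (j + 2)
    have hp0 : 1 ≤ 2 ^ kk s (a j) := Nat.one_le_two_pow
    have hp1 : 1 ≤ 2 ^ kk s (a (j + 1)) := Nat.one_le_two_pow
    show 2 * (a (j + 2) - 1 + 1 - a (j + 1)) ≤ a (j + 1) - 1 + 1 - a j
    omega
end

section
/- Any interval [q,s] of natural numbers can be partitioned into at most 2·⌈log₂(s − q + 2)⌉ disjoint intervals, each of which belongs to the geometric cover. -/
def GPart (q s m : ℕ) (L : ℕ → ℕ × ℕ) : Prop :=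
  (∀ j < m, ∃ i k : ℕ, 1 ≤ i ∧ (L j).1 = i * 2 ^ k ∧ (L j).2 = (i + 1) * 2 ^ k - 1) ∧
  (L 0).1 = q ∧ (L (m - 1)).2 = s ∧ (∀ j, j + 1 < m → (L (j + 1)).1 = (L j).2 + 1)

lemma gsingle {i k : ℕ} (hi : 1 ≤ i) :
    GPart (i * 2 ^ k) (i * 2 ^ k + 2 ^ k - 1) 1
      (fun _ => (i * 2 ^ k, i * 2 ^ k + 2 ^ k - 1)) := by
  refine ⟨fun j _ => ⟨i, k, hi, rfl, by simp [add_mul]⟩, rfl, rfl, by omega⟩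

lemma gconcat {q t s m₁ m₂ : ℕ} {L₁ L₂ : ℕ → ℕ × ℕ}
    (h₁ : GPart q t m₁ L₁) (h₂ : GPart (t + 1) s m₂ L₂)
    (hm₁ : 0 < m₁) (hm₂ : 0 < m₂) :
    GPart q s (m₁ + m₂) (fun j => if j < m₁ then L₁ j else L₂ (j - m₁)) := by
  obtain ⟨c₁, a₁, b₁, s₁⟩ := h₁
  obtain ⟨c₂, a₂, b₂, s₂⟩ := h₂
  refine ⟨?_, ?_, ?_, ?_⟩
  · intro j hj
    by_cases h : j < m₁
    · simpa [h] using c₁ j h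
    · simpa [h] using c₂ (j - m₁) (by omega)
  · simpa [hm₁] using a₁
  · have h : ¬ (m₁ + m₂ - 1 < m₁) := by omega
    simp only [h, if_false]
    have e : m₁ + m₂ - 1 - m₁ = m₂ - 1 := by omega
    rw [e, b₂]
  · intro j hj
    by_cases h : j + 1 < m₁
    · simpa [h, show j < m₁ by omega] using s₁ j h
    · by_cases h' : j + 1 = m₁
      · simp only [show ¬ (j + 1 < m₁) by omega, if_false,
          show j < m₁ by omega, if_true]
        have e : j + 1 - m₁ = 0 := by omega
        rw [e, a₂, show j = m₁ - 1 by omega, b₁]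
      · simp only [show ¬ (j + 1 < m₁) by omega, if_false,
          show ¬ (j < m₁) by omega, if_false]
        have e : j + 1 - m₁ = (j - m₁) + 1 := by omega
        rw [e]
        exact s₂ (j - m₁) (by omega)

lemma gleft : ∀ n q c : ℕ, 1 ≤ q → 2 ^ c ∣ q → 1 ≤ n → n < 2 ^ (c + 1) →
    ∃ m L, 0 < m ∧ m ≤ Nat.clog 2 (n + 1) ∧ GPart q (q + n - 1) m L := by
  intro n
  induction n using Nat.strong_induction_on with
  | _ n ih =>
    intro q c hq hdvd hn hlt
    set k := Nat.log 2 n with hk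
    have h2k : 2 ^ k ≤ n := Nat.pow_log_le_self 2 (by omega)
    have hklt : n < 2 ^ (k + 1) := Nat.lt_pow_succ_log_self (by norm_num) n
    have hkc : k ≤ c := by
      by_contra h
      have : 2 ^ (c + 1) ≤ 2 ^ k := Nat.pow_le_pow_right (by norm_num) (by omega)
      omega
    have hdk : 2 ^ k ∣ q := dvd_trans (pow_dvd_pow 2 hkc) hdvd
    obtain ⟨i, hi⟩ := hdk
    have hi1 : 1 ≤ i := by
      rcases Nat.eq_zero_or_pos i with h | h
      · subst h; simp at hi; omega
      · exact h
    have hq' : q = i * 2 ^ k := by rw [hi]; ring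
    have hone : k + 1 ≤ Nat.clog 2 (n + 1) :=
      (Nat.lt_clog_iff_pow_lt (by norm_num)).2 (by omega)
    rcases eq_or_lt_of_le h2k with heq | hlt2
    · have h1 := gsingle (k := k) hi1
      rw [← hq'] at h1
      rw [show q + 2 ^ k - 1 = q + n - 1 by omega] at h1
      exact ⟨1, _, one_pos, by omega, h1⟩
    · have hd2 : (2:ℕ) ^ k ∣ q + 2 ^ k := by
        exact dvd_add ⟨i, hi⟩ dvd_rfl
      obtain ⟨m₂, L₂, hm₂, hb₂, hp₂⟩ :=
        ih (n - 2 ^ k) (by omega) (q + 2 ^ k) k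
          (by have := pow_pos (show 0 < 2 by norm_num) k; omega) hd2 (by omega)
          (by have := Nat.pow_lt_pow_succ (a := 2) (n := k) (by norm_num); omega)
      have hb₂' : m₂ ≤ k := by
        have : Nat.clog 2 (n - 2 ^ k + 1) ≤ k :=
          (Nat.clog_le_iff_le_pow (by norm_num)).2 (by omega)
        omega
      have h1 : GPart q (q + 2 ^ k - 1) 1 (fun _ => (q, q + 2 ^ k - 1)) := by
        have := gsingle (k := k) hi1
        rw [← hq'] at this
        exact this
      have hp₂' : GPart (q + 2 ^ k - 1 + 1) (q + n - 1) m₂ L₂ := by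
        rw [show q + 2 ^ k - 1 + 1 = q + 2 ^ k by
            have := pow_pos (show 0 < 2 by norm_num) k; omega,
          show q + n - 1 = q + 2 ^ k + (n - 2 ^ k) - 1 by omega] at *
        exact hp₂
      exact ⟨1 + m₂, _, by omega, by omega, gconcat h1 hp₂' one_pos hm₂⟩

lemma gright : ∀ n q c : ℕ, 1 ≤ q → 2 ^ c ∣ (q + n) → 1 ≤ n → n < 2 ^ (c + 1) →
    ∃ m L, 0 < m ∧ m ≤ Nat.clog 2 (n + 1) ∧ GPart q (q + n - 1) m L := by
  intro n
  induction n using Nat.strong_induction_on with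
  | _ n ih =>
    intro q c hq hdvd hn hlt
    set k := Nat.log 2 n with hk
    have h2k : 2 ^ k ≤ n := Nat.pow_log_le_self 2 (by omega)
    have hklt : n < 2 ^ (k + 1) := Nat.lt_pow_succ_log_self (by norm_num) n
    have hkc : k ≤ c := by
      by_contra h
      have : 2 ^ (c + 1) ≤ 2 ^ k := Nat.pow_le_pow_right (by norm_num) (by omega)
      omega
    have hdk : 2 ^ k ∣ q + n := dvd_trans (pow_dvd_pow 2 hkc) hdvd
    obtain ⟨j, hj⟩ := hdk
    have hkk : 2 ^ (k+1) = 2 * 2 ^ k := by ring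
    have hj2 : 2 ≤ j := by nlinarith [hj, h2k, hq]
    have hone : k + 1 ≤ Nat.clog 2 (n + 1) :=
      (Nat.lt_clog_iff_pow_lt (by norm_num)).2 (by omega)
    have hsingle := gsingle (k := k) (i := j - 1) (by omega)
    have h1 : (j - 1) * 2 ^ k + 2 ^ k = q + n := by
      obtain ⟨d, rfl⟩ : ∃ d, j = d + 2 := ⟨j - 2, by omega⟩
      rw [hj, show d + 2 - 1 = d + 1 by omega]; ring
    have hstart : (j - 1) * 2 ^ k = q + n - 2 ^ k := by omega
    have hend : (j - 1) * 2 ^ k + 2 ^ k - 1 = q + n - 1 := by omega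
    rw [hstart] at hsingle
    rw [show q + n - 2 ^ k + 2 ^ k - 1 = q + n - 1 by omega] at hsingle
    rcases eq_or_lt_of_le h2k with heq | hlt2
    · rw [show q + n - 2 ^ k = q by omega] at hsingle
      exact ⟨1, _, one_pos, by omega, hsingle⟩
    · have hd2 : (2:ℕ) ^ k ∣ q + (n - 2 ^ k) := by
        have : j * 2 ^ k = q + n := by rw [hj]; ring
        have : q + (n - 2 ^ k) = (j - 1) * 2 ^ k := by omega
        rw [this]; exact Dvd.intro_left _ rfl
      obtain ⟨m₁, L₁, hm₁, hb₁, hp₁⟩ :=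
        ih (n - 2 ^ k) (by omega) q k hq hd2 (by omega) (by omega)
      have hb₁' : m₁ ≤ k := by
        have : Nat.clog 2 (n - 2 ^ k + 1) ≤ k :=
          (Nat.clog_le_iff_le_pow (by norm_num)).2 (by omega)
        omega
      have hp₂ : GPart (q + (n - 2 ^ k) - 1 + 1) (q + n - 1) 1
          (fun _ => (q + n - 2 ^ k, q + n - 1)) := by
        have e : q + (n - 2 ^ k) - 1 + 1 = q + n - 2 ^ k := by omega
        rw [e]
        exact hsingle
      exact ⟨m₁ + 1, _, by omega, by omega, gconcat hp₁ hp₂ hm₁ one_pos⟩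

/-- Any interval `[q,s]` of positive natural numbers can be partitioned into at
most `2 * ⌈log₂ (s - q + 2)⌉` disjoint consecutive intervals, each belonging to
the geometric cover `{[i * 2^k, (i+1) * 2^k - 1] : i ≥ 1, k ≥ 0}`. -/
theorem stmt2 (q s : ℕ) (hq : 1 ≤ q) (hqs : q ≤ s) :
    ∃ (m : ℕ) (L : ℕ → ℕ × ℕ), 0 < m ∧ m ≤ 2 * Nat.clog 2 (s - q + 2) ∧
      (∀ j < m, ∃ i k : ℕ, 1 ≤ i ∧ (L j).1 = i * 2 ^ k ∧ (L j).2 = (i + 1) * 2 ^ k - 1) ∧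
      (L 0).1 = q ∧ (L (m - 1)).2 = s ∧
      (∀ j, j + 1 < m → (L (j + 1)).1 = (L j).2 + 1) := by
  set n := s - q + 1 with hn
  have hs : s = q + n - 1 := by omega
  have hn1 : 1 ≤ n := by omega
  have hsq2 : s - q + 2 = n + 1 := by omega
  set k := Nat.log 2 n with hk
  have h2k : 2 ^ k ≤ n := Nat.pow_log_le_self 2 (by omega)
  have hklt : n < 2 ^ (k + 1) := Nat.lt_pow_succ_log_self (by norm_num) n
  set r := q % 2 ^ k with hr
  have hrlt : r < 2 ^ k := Nat.mod_lt _ (by positivity)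
  rcases eq_or_ne r 0 with h0 | h0
  · obtain ⟨m, L, hm, hb, hP⟩ :=
      gleft n q k hq (Nat.dvd_of_mod_eq_zero (by omega : q % 2 ^ k = 0)) hn1 hklt
    obtain ⟨P1, P2, P3, P4⟩ := hP
    refine ⟨m, L, hm, ?_, P1, P2, by rw [hs]; exact P3, P4⟩
    rw [hsq2]; omega
  · set d := 2 ^ k - r with hd
    have hd1 : 1 ≤ d := by omega
    have hdlt : d < 2 ^ k := by omega
    have hdvdl : 2 ^ k ∣ q + d := by
      have hq0 : 2 ^ k * (q / 2 ^ k) + r = q := by rw [hr]; exact Nat.div_add_mod q (2 ^ k)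
      refine ⟨q / 2 ^ k + 1, ?_⟩
      rw [mul_add, mul_one]; omega
    obtain ⟨m₁, L₁, hm₁, hb₁, hP₁⟩ :=
      gright d q k hq hdvdl hd1 (by omega)
    have hM1 : 1 ≤ q + d := by omega
    have hndpos : 1 ≤ n - d := by omega
    obtain ⟨m₂, L₂, hm₂, hb₂, hP₂⟩ :=
      gleft (n - d) (q + d) k hM1 hdvdl hndpos (by omega)
    have hP₂' : GPart (q + d - 1 + 1) (q + n - 1) m₂ L₂ := by
      rw [show q + d - 1 + 1 = q + d by omega,
        show q + n - 1 = q + d + (n - d) - 1 by omega]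
      exact hP₂
    have hc := gconcat hP₁ hP₂' hm₁ hm₂
    obtain ⟨P1, P2, P3, P4⟩ := hc
    refine ⟨m₁ + m₂, _, by omega, ?_, P1, P2, by rw [hs]; exact P3, P4⟩
    rw [hsq2]
    have e₁ : m₁ ≤ Nat.clog 2 (n + 1) := le_trans hb₁ (Nat.clog_mono_right 2 (by omega))
    have e₂ : m₂ ≤ Nat.clog 2 (n + 1) := le_trans hb₂ (Nat.clog_mono_right 2 (by omega))
    omega
end

section
/- The Specialist Aggregation Algorithm with uniform prior over K experts satisfies, for any fixed expert j, the mix-loss regret bound: the sum over rounds t in which expert j is awake of (−log(Σ_{k ∈ A_t} w_{t,k} e^{−ℓ_{t,k}}) − ℓ_{t,j}) is at most log K, where w_{t,k} = u_{t,k}·1{k ∈ A_t}/Σ_{i ∈ A_t} u_{t,i} and the weights are updated by u_{t+1,k} = u_{t,k} e^{−ℓ_{t,k}} (Σ_{i ∈ A_t} u_{t,i}) / (Σ_{i ∈ A_t} u_{t,i} e^{−ℓ_{t,i}}) for awake experts k ∈ A_t and u_{t+1,k} = u_{t,k} for sleeping experts. -/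
open Finset in
/-- Mix-loss regret bound for the Specialist Aggregation Algorithm with uniform
prior over `K` experts: for any fixed expert `j`, the sum over rounds where `j`
is awake of `(-log (∑_{k ∈ A_t} w_{t,k} e^{-ℓ_{t,k}}) - ℓ_{t,j})` is at most
`log K`. -/
theorem stmt3 (K n : ℕ) (hK : 0 < K)
    (A : ℕ → Finset (Fin K)) (hA : ∀ t, (A t).Nonempty)
    (ℓ : ℕ → Fin K → ℝ)
    (u w : ℕ → Fin K → ℝ)
    (hu1 : ∀ k, u 1 k = 1 / K)
    (hw : ∀ t k, w t k = if k ∈ A t then u t k / ∑ i ∈ A t, u t i else 0)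
    (hupd : ∀ t k, k ∈ A t →
      u (t + 1) k = u t k * Real.exp (-ℓ t k) * (∑ i ∈ A t, u t i)
        / ∑ i ∈ A t, u t i * Real.exp (-ℓ t i))
    (hfreeze : ∀ t k, k ∉ A t → u (t + 1) k = u t k)
    (j : Fin K) :
    ∑ t ∈ Finset.Icc 1 n,
        (if j ∈ A t then
          -Real.log (∑ k ∈ A t, w t k * Real.exp (-ℓ t k)) - ℓ t j
        else 0)
      ≤ Real.log K := by
  have hK0 : (0:ℝ) < K := by exact_mod_cast hK
  -- positivity of weights for t ≥ 1
  have hpos : ∀ t, 1 ≤ t → ∀ k, 0 < u t k := by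
    intro t
    induction t with
    | zero => omega
    | succ t ih =>
      intro ht k
      rcases Nat.lt_or_ge 1 (t + 1) with h | h
      · have ht1 : 1 ≤ t := by omega
        have ihp := ih ht1
        by_cases hk : k ∈ A t
        · rw [hupd t k hk]
          have hS : 0 < ∑ i ∈ A t, u t i :=
            Finset.sum_pos (fun i _ => ihp i) (hA t)
          have hM : 0 < ∑ i ∈ A t, u t i * Real.exp (-ℓ t i) :=
            Finset.sum_pos (fun i _ => mul_pos (ihp i) (Real.exp_pos _)) (hA t)
          exact div_pos (mul_pos (mul_pos (ihp k) (Real.exp_pos _)) hS) hM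
        · rw [hfreeze t k hk]; exact ihp k
      · have : t = 0 := by omega
        subst this
        rw [hu1]; positivity
  -- total mass stays 1 for t ≥ 1
  have hsum : ∀ t, 1 ≤ t → ∑ k, u t k = 1 := by
    intro t
    induction t with
    | zero => omega
    | succ t ih =>
      intro ht
      rcases Nat.lt_or_ge 1 (t + 1) with h | h
      · have ht1 : 1 ≤ t := by omega
        have ihp := hpos t ht1
        have hM : 0 < ∑ i ∈ A t, u t i * Real.exp (-ℓ t i) :=
          Finset.sum_pos (fun i _ => mul_pos (ihp i) (Real.exp_pos _)) (hA t)
        have key : ∑ k, u (t + 1) k = ∑ k, u t k := by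
          rw [← Finset.sum_filter_add_sum_filter_not Finset.univ (· ∈ A t) (u (t+1)),
              ← Finset.sum_filter_add_sum_filter_not Finset.univ (· ∈ A t) (u t)]
          have hfil : Finset.univ.filter (· ∈ A t) = A t := by
            ext k; simp
          congr 1
          · rw [hfil]
            have : ∀ k ∈ A t, u (t+1) k
                = u t k * Real.exp (-ℓ t k) * (∑ i ∈ A t, u t i)
                  / ∑ i ∈ A t, u t i * Real.exp (-ℓ t i) := hupd t
            rw [Finset.sum_congr rfl this, ← Finset.sum_div, ← Finset.sum_mul]
            rw [mul_div_cancel_left₀ _ hM.ne']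
          · exact Finset.sum_congr rfl (fun k hk => by
              simp only [Finset.mem_filter] at hk
              exact hfreeze t k hk.2)
        rw [key]; exact ih ht1
      · have : t = 0 := by omega
        subst this
        simp only [hu1]
        rw [Finset.sum_const, Finset.card_univ, Fintype.card_fin, nsmul_eq_mul]
        field_simp
  -- per-round identity
  have hstep : ∀ t, 1 ≤ t →
      (if j ∈ A t then
          -Real.log (∑ k ∈ A t, w t k * Real.exp (-ℓ t k)) - ℓ t j
        else 0) = Real.log (u (t+1) j) - Real.log (u t j) := by
    intro t ht
    by_cases hj : j ∈ A t
    · simp only [if_pos hj]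
      have ihp := hpos t ht
      have hS : 0 < ∑ i ∈ A t, u t i :=
        Finset.sum_pos (fun i _ => ihp i) (hA t)
      have hM : 0 < ∑ i ∈ A t, u t i * Real.exp (-ℓ t i) :=
        Finset.sum_pos (fun i _ => mul_pos (ihp i) (Real.exp_pos _)) (hA t)
      have hW : ∑ k ∈ A t, w t k * Real.exp (-ℓ t k)
          = (∑ i ∈ A t, u t i * Real.exp (-ℓ t i)) / (∑ i ∈ A t, u t i) := by
        rw [Finset.sum_div]
        refine Finset.sum_congr rfl (fun k hk => ?_)
        rw [hw, if_pos hk]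
        ring
      rw [hW, hupd t j hj]
      rw [Real.log_div hM.ne' hS.ne',
        Real.log_div (mul_pos (mul_pos (ihp j) (Real.exp_pos _)) hS).ne' hM.ne',
        Real.log_mul (mul_pos (ihp j) (Real.exp_pos _)).ne' hS.ne',
        Real.log_mul (ihp j).ne' (Real.exp_pos _).ne',
        Real.log_exp]
      ring
    · simp [if_neg hj, hfreeze t j hj]
  -- telescope
  have htel : ∑ t ∈ Finset.Icc 1 n,
      (if j ∈ A t then
          -Real.log (∑ k ∈ A t, w t k * Real.exp (-ℓ t k)) - ℓ t j
        else 0) = Real.log (u (n+1) j) - Real.log (u 1 j) := by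
    rw [Finset.sum_congr rfl (fun t htm => hstep t (Finset.mem_Icc.mp htm).1)]
    rw [← Finset.Ico_add_one_right_eq_Icc, Finset.sum_Ico_eq_sum_range]
    have := Finset.sum_range_sub (fun i => Real.log (u (i+1) j)) n
    simpa [Nat.add_sub_cancel, add_comm, add_assoc, add_left_comm] using this
  rw [htel, hu1, Real.log_div one_ne_zero hK0.ne', Real.log_one]
  have h1 : u (n+1) j ≤ 1 := by
    rw [← hsum (n+1) (by omega)]
    exact Finset.single_le_sum (fun k _ => (hpos (n+1) (by omega) k).le)
      (Finset.mem_univ j)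
  have h2 : Real.log (u (n+1) j) ≤ 0 :=
    Real.log_nonpos (hpos (n+1) (by omega) j).le h1
  linarith
end

section
/- The squared loss f(x) = (y − x)² restricted to x, y ∈ [−D, D] is η-exp-concave for η = 1/(8D²): for any probability weights w_k and points x_k ∈ [−D, D], Σ_k w_k e^{−η (y − x_k)²} ≤ e^{−η (y − Σ_k w_k x_k)²}. -/
lemma aux_hasDeriv (η y : ℝ) (x : ℝ) :
    HasDerivAt (fun x => Real.exp (-η * (y - x) ^ 2))
      (2 * η * (y - x) * Real.exp (-η * (y - x) ^ 2)) x := by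
  have h1 : HasDerivAt (fun x : ℝ => -η * (y - x) ^ 2) (2 * η * (y - x)) x := by
    have : HasDerivAt (fun x : ℝ => (y - x) ^ 2) (2 * (y - x) * (-1)) x := by
      have hb : HasDerivAt (fun x : ℝ => y - x) (-1) x := by
        exact (hasDerivAt_id' x).const_sub y
      exact (hb.pow 2).congr_deriv (by norm_num)
    have := this.const_mul (-η)
    exact this.congr_deriv (by ring)
  simpa [mul_comm] using h1.exp

lemma aux_concave (D : ℝ) (hD : 0 < D) (y : ℝ) (hy : |y| ≤ D) :
    ConcaveOn ℝ (Set.Icc (-D) D)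
      (fun x => Real.exp (-(1 / (8 * D ^ 2)) * (y - x) ^ 2)) := by
  set η : ℝ := 1 / (8 * D ^ 2) with hη
  have hηpos : 0 < η := by positivity
  refine concaveOn_of_hasDerivWithinAt2_nonpos (f' := fun x =>
      2 * η * (y - x) * Real.exp (-η * (y - x) ^ 2))
      (f'' := fun x => (-2 * η + (2 * η * (y - x)) ^ 2) * Real.exp (-η * (y - x) ^ 2))
      (convex_Icc _ _) ?_ ?_ ?_ ?_
  · exact (Continuous.continuousOn (by continuity))
  · intro x hx; exact (aux_hasDeriv η y x).hasDerivWithinAt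
  · intro x hx
    have h1 : HasDerivAt (fun x : ℝ => 2 * η * (y - x)) (-(2 * η)) x := by
      have hb : HasDerivAt (fun x : ℝ => y - x) (-1) x := by
        exact (hasDerivAt_id' x).const_sub y
      have := hb.const_mul (2 * η)
      exact this.congr_deriv (by ring)
    have := h1.mul (aux_hasDeriv η y x)
    refine HasDerivAt.hasDerivWithinAt ?_
    exact this.congr_deriv (by ring)
  · intro x hx
    rw [interior_Icc] at hx
    have hxD : |x| < D := abs_lt.2 hx
    have h1 : (y - x) ^ 2 ≤ (2 * D) ^ 2 := by
      have : |y - x| ≤ 2 * D := by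
        calc |y - x| ≤ |y| + |x| := abs_sub y x
        _ ≤ D + D := add_le_add hy hxD.le
        _ = 2 * D := by ring
      calc (y - x) ^ 2 = |y - x| ^ 2 := (sq_abs _).symm
      _ ≤ (2 * D) ^ 2 := by
        apply pow_le_pow_left₀ (abs_nonneg _) this
    have key : -2 * η + (2 * η * (y - x)) ^ 2 ≤ 0 := by
      have : (2 * η * (y - x)) ^ 2 = 4 * η ^ 2 * (y - x) ^ 2 := by ring
      rw [this]
      have h2 : 4 * η ^ 2 * (y - x) ^ 2 ≤ 4 * η ^ 2 * (2 * D) ^ 2 := by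
        apply mul_le_mul_of_nonneg_left h1; positivity
      have h3 : 4 * η ^ 2 * (2 * D) ^ 2 = 2 * η := by
        rw [hη]; field_simp; ring
      nlinarith
    exact mul_nonpos_of_nonpos_of_nonneg key (Real.exp_pos _).le

/-- The squared loss `f(x) = (y - x)^2` restricted to `x, y ∈ [-D, D]` is
`η`-exp-concave for `η = 1 / (8 D^2)`: for any probability weights `w_k` and
points `x_k ∈ [-D, D]`,
`∑_k w_k e^{-η (y - x_k)^2} ≤ e^{-η (y - ∑_k w_k x_k)^2}`. -/
theorem stmt5 (D : ℝ) (hD : 0 < D) (y : ℝ) (hy : |y| ≤ D)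
    (m : ℕ) (w x : Fin m → ℝ)
    (hw : ∀ k, 0 ≤ w k) (hw1 : ∑ k, w k = 1) (hx : ∀ k, |x k| ≤ D) :
    ∑ k, w k * Real.exp (-(1 / (8 * D ^ 2)) * (y - x k) ^ 2)
      ≤ Real.exp (-(1 / (8 * D ^ 2)) * (y - ∑ k, w k * x k) ^ 2) := by
  have := (aux_concave D hD y hy).le_map_sum (t := Finset.univ) (w := w) (p := x)
    (fun k _ => hw k) hw1 (fun k _ => abs_le.mp (hx k))
  simpa [smul_eq_mul] using this
end

section
/- Let θ⁽¹⁾,…,θ⁽ᵐ⁾ be real numbers with |θ⁽ⁱ⁾| ≤ B for some B > 0, let p(1),…,p(m) be positive integers with Σᵢ p(i) ≤ n, and let C_n = Σ_{i=1}^{m−1} |θ⁽ⁱ⁺¹⁾ − θ⁽ⁱ⁾|. Then there exists a partition of {1,…,m} into M consecutive blocks such that: (1) every block except possibly the last satisfies V(block) ≤ B/√(Σ_{k ∈ block} p(k)), where V([i,j]) = Σ_{k=i}^{j−1} |θ⁽ᵏ⁺¹⁾ − θ⁽ᵏ⁾|; (2) the last block with its final element removed also satisfies this inequality; and (3) M ≤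 max{3 n^{1/3} C_n^{2/3} B^{−2/3}, 1}. -/
open Finset

namespace Stmt6Aux

variable (θ : ℕ → ℝ) (B : ℝ) (p : ℕ → ℕ) (m : ℕ)

/-- The block condition: variation of `(s, r]` minus its last jump is at most
`B / sqrt(sum of p over (s, r])`. -/
def GoodB (s r : ℕ) : Prop :=
  (∑ k ∈ Ioc s (r - 1), |θ (k + 1) - θ k|) ≤ B / Real.sqrt (∑ k ∈ Ioc s r, (p k : ℝ))

noncomputable instance (s : ℕ) :
    DecidablePred (fun r => s + 1 ≤ r ∧ GoodB θ B p s r) := Classical.decPred _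

noncomputable def goodEnd (s : ℕ) : ℕ :=
  Nat.findGreatest (fun r => s + 1 ≤ r ∧ GoodB θ B p s r) m

lemma goodB_base (hB : 0 ≤ B) (s : ℕ) : GoodB θ B p s (s + 1) := by
  unfold GoodB
  rw [Nat.add_sub_cancel, Ioc_self, sum_empty]
  exact div_nonneg hB (Real.sqrt_nonneg _)

lemma goodEnd_lb (hB : 0 ≤ B) {s : ℕ} (hs : s < m) : s + 1 ≤ goodEnd θ B p m s :=
  Nat.le_findGreatest hs ⟨le_rfl, goodB_base θ B p hB s⟩

lemma goodEnd_le (s : ℕ) : goodEnd θ B p m s ≤ m := Nat.findGreatest_le m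

lemma goodEnd_good (hB : 0 ≤ B) {s : ℕ} (hs : s < m) : GoodB θ B p s (goodEnd θ B p m s) :=
  (Nat.findGreatest_spec (P := fun r => s + 1 ≤ r ∧ GoodB θ B p s r) hs
    ⟨le_rfl, goodB_base θ B p hB s⟩).2

lemma goodEnd_max (hB : 0 ≤ B) {s k : ℕ} (hs : s < m) (h1 : goodEnd θ B p m s < k)
    (h2 : k ≤ m) : ¬ GoodB θ B p s k := by
  intro hg
  exact Nat.findGreatest_is_greatest (P := fun r => s + 1 ≤ r ∧ GoodB θ B p s r) h1 h2
    ⟨le_trans (goodEnd_lb θ B p m hB hs) h1.le, hg⟩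

noncomputable def ff : ℕ → ℕ
  | 0 => 0
  | i + 1 => if ff i < m then goodEnd θ B p m (ff i) else ff i

lemma ff_zero : ff θ B p m 0 = 0 := rfl

lemma ff_le : ∀ i, ff θ B p m i ≤ m := by
  intro i
  induction i with
  | zero => exact Nat.zero_le m
  | succ i ih =>
    rw [ff]
    split
    · exact goodEnd_le θ B p m _
    · exact ih

lemma ff_lt_succ (hB : 0 ≤ B) {i : ℕ} (h : ff θ B p m i < m) :
    ff θ B p m i < ff θ B p m (i + 1) := by
  rw [ff, if_pos h]
  exact goodEnd_lb θ B p m hB h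

lemma ff_succ_eq {i : ℕ} (h : ff θ B p m i < m) :
    ff θ B p m (i + 1) = goodEnd θ B p m (ff θ B p m i) := by
  rw [ff, if_pos h]

lemma ff_mono (hB : 0 ≤ B) : Monotone (ff θ B p m) := by
  apply monotone_nat_of_le_succ
  intro i
  rw [ff]
  split
  · exact le_trans (Nat.le_succ _) (goodEnd_lb θ B p m hB ‹_›)
  · exact le_rfl

lemma ff_reach (hB : 0 ≤ B) : ff θ B p m m = m := by
  have key : ∀ i, ff θ B p m i = m ∨ i ≤ ff θ B p m i := by
    intro i
    induction i with
    | zero => exact Or.inr le_rfl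
    | succ i ih =>
      rcases ih with h | h
      · left; rw [ff, h, if_neg (lt_irrefl m)]
      · by_cases hlt : ff θ B p m i < m
        · have := ff_lt_succ θ B p m hB hlt
          rcases Nat.lt_or_ge (ff θ B p m (i+1)) m with h2 | h2
          · right; omega
          · left; exact le_antisymm (ff_le θ B p m _) h2
        · left
          have := ff_le θ B p m i
          have hi : ff θ B p m i = m := by omega
          rw [ff, hi, if_neg (lt_irrefl m)]
  rcases key m with h | h
  · exact h
  · exact le_antisymm (ff_le θ B p m m) h

lemma ff_lt_of_lt (hB : 0 ≤ B) : ∀ {i j : ℕ}, i < j → (∀ k, k < j → ff θ B p m k < m) →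
    ff θ B p m i < ff θ B p m j := by
  intro i j
  induction j with
  | zero => omega
  | succ j ih =>
    intro hij hk
    have hj : ff θ B p m j < m := hk j (Nat.lt_succ_self j)
    have h2 := ff_lt_succ θ B p m hB hj
    rcases Nat.lt_or_ge i j with h | h
    · exact lt_trans (ih h (fun k hk' => hk k (Nat.lt_succ_of_lt hk'))) h2
    · have : i = j := by omega
      subst this; exact h2

lemma two_cbrt_le {x : ℝ} (hx : 0 ≤ x) : 2 * 2 ^ ((1 : ℝ) / 3) * x ≤ 3 * x := by
  have h1 : ((27 : ℝ) / 8) ^ ((1 : ℝ) / 3) = 3 / 2 := by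
    rw [show (27 : ℝ) / 8 = ((3 : ℝ) / 2) ^ (3 : ℕ) by norm_num,
      ← Real.rpow_natCast ((3 : ℝ) / 2) 3, ← Real.rpow_mul (by norm_num)]
    norm_num
  have h2 : (2 : ℝ) ^ ((1 : ℝ) / 3) ≤ ((27 : ℝ) / 8) ^ ((1 : ℝ) / 3) :=
    Real.rpow_le_rpow (by norm_num) (by norm_num) (by norm_num)
  nlinarith

end Stmt6Aux

open Finset Stmt6Aux in
/-- Greedy partitioning of a bounded sequence of total variation `C_n` into
`M ≤ max {3 n^{1/3} C_n^{2/3} B^{-2/3}, 1}` consecutive blocks, where every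
block except possibly the last (and the last block with its final element
removed) has total variation at most `B / √(∑_{k ∈ block} p(k))`. Blocks are
`[r(i-1)+1, r i]` for `i = 1, …, M` with `r 0 = 0` and `r M = m`. -/
theorem stmt6 (n m : ℕ) (hm : 0 < m) (θ : ℕ → ℝ) (B : ℝ) (hB : 0 < B)
    (hθ : ∀ i, 1 ≤ i → i ≤ m → |θ i| ≤ B)
    (p : ℕ → ℕ) (hp : ∀ i, 1 ≤ i → i ≤ m → 0 < p i)
    (hpn : ∑ i ∈ Finset.Icc 1 m, p i ≤ n)
    (C : ℝ) (hC : C = ∑ i ∈ Finset.Icc 1 (m - 1), |θ (i + 1) - θ i|) :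
    ∃ (M : ℕ) (r : ℕ → ℕ), 0 < M ∧ r 0 = 0 ∧ r M = m ∧
      (∀ i < M, r i < r (i + 1)) ∧
      -- (1) every block except possibly the last
      (∀ i, 1 ≤ i → i < M →
        (∑ k ∈ Finset.Icc (r (i - 1) + 1) (r i - 1), |θ (k + 1) - θ k|)
          ≤ B / Real.sqrt (∑ k ∈ Finset.Icc (r (i - 1) + 1) (r i), (p k : ℝ))) ∧
      -- (2) the last block with its final element removed
      ((∑ k ∈ Finset.Icc (r (M - 1) + 1) (m - 2), |θ (k + 1) - θ k|)
          ≤ B / Real.sqrt (∑ k ∈ Finset.Icc (r (M - 1) + 1) (m - 1), (p k : ℝ))) ∧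
      -- (3) bound on the number of blocks
      (M : ℝ) ≤ max (3 * (n : ℝ) ^ ((1 : ℝ) / 3) * C ^ ((2 : ℝ) / 3)
        * B ^ (-(2 : ℝ) / 3)) 1 := by
  classical
  set r : ℕ → ℕ := ff θ B p m with hr
  have hex : ∃ i, r i = m := ⟨m, ff_reach θ B p m hB.le⟩
  set M : ℕ := Nat.find hex with hM
  have hfM : r M = m := Nat.find_spec hex
  have hMpos : 0 < M := by
    by_contra h
    push_neg at h
    have h0 : M = 0 := Nat.le_zero.mp h
    have h1 : r 0 = m := h0 ▸ hfM
    have h2 : r 0 = 0 := ff_zero θ B p m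
    omega
  have hlt : ∀ i, i < M → r i < m := by
    intro i hi
    have h1 := Nat.find_min hex hi
    have h2 : r i ≤ m := ff_le θ B p m i
    omega
  refine ⟨M, r, hMpos, ff_zero θ B p m, hfM, ?_, ?_, ?_, ?_⟩
  · intro i hi
    exact ff_lt_succ θ B p m hB.le (hlt i hi)
  · -- (1)
    intro i h1 h2
    have hi' : r (i - 1 + 1) = goodEnd θ B p m (r (i - 1)) :=
      ff_succ_eq θ B p m (hlt (i - 1) (by omega))
    rw [show i - 1 + 1 = i from by omega] at hi'
    have hg := goodEnd_good θ B p m hB.le (hlt (i - 1) (by omega))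
    rw [← hi'] at hg
    unfold GoodB at hg
    rw [Finset.Icc_add_one_left_eq_Ioc, Finset.Icc_add_one_left_eq_Ioc]
    exact hg
  · -- (2)
    set s := r (M - 1) with hs
    have hsm : s < m := hlt _ (by omega)
    have hmg : m = goodEnd θ B p m s := by
      have h1 : r (M - 1 + 1) = goodEnd θ B p m (r (M - 1)) :=
        ff_succ_eq θ B p m (hlt (M - 1) (by omega))
      rw [show M - 1 + 1 = M from by omega, hfM] at h1
      exact h1
    have hg := goodEnd_good θ B p m hB.le hsm
    rw [← hmg] at hg
    unfold GoodB at hg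
    rw [Finset.Icc_add_one_left_eq_Ioc, Finset.Icc_add_one_left_eq_Ioc]
    rcases Nat.lt_or_ge s (m - 1) with hcase | hcase
    · -- s + 1 ≤ m - 1
      have hPpos : (0:ℝ) < ∑ k ∈ Ioc s (m - 1), (p k : ℝ) := by
        have hmem : s + 1 ∈ Ioc s (m - 1) := by
          simp only [mem_Ioc]; omega
        have h1 : (1:ℝ) ≤ (p (s+1) : ℝ) := by
          exact_mod_cast hp (s+1) (by omega) (by omega)
        have := Finset.single_le_sum (f := fun k => (p k : ℝ))
          (fun k _ => by positivity) hmem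
        linarith
      have hsub : ∑ k ∈ Ioc s (m - 1), (p k : ℝ) ≤ ∑ k ∈ Ioc s m, (p k : ℝ) := by
        apply Finset.sum_le_sum_of_subset_of_nonneg
        · apply Finset.Ioc_subset_Ioc_right; omega
        · intro k _ _; positivity
      have h1 : (∑ k ∈ Ioc s (m - 2), |θ (k + 1) - θ k|)
          ≤ ∑ k ∈ Ioc s (m - 1), |θ (k + 1) - θ k| := by
        apply Finset.sum_le_sum_of_subset_of_nonneg
        · apply Finset.Ioc_subset_Ioc_right; omega
        · intro k _ _; positivity
      have h2 : B / Real.sqrt (∑ k ∈ Ioc s m, (p k : ℝ))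
          ≤ B / Real.sqrt (∑ k ∈ Ioc s (m - 1), (p k : ℝ)) := by
        apply div_le_div_of_nonneg_left hB.le
        · exact Real.sqrt_pos.mpr hPpos
        · exact Real.sqrt_le_sqrt hsub
      calc (∑ k ∈ Ioc s (m - 2), |θ (k + 1) - θ k|)
          ≤ ∑ k ∈ Ioc s (m - 1), |θ (k + 1) - θ k| := h1
        _ ≤ B / Real.sqrt (∑ k ∈ Ioc s m, (p k : ℝ)) := hg
        _ ≤ _ := h2
    · -- s = m - 1 : both sides degenerate
      have he1 : Ioc s (m - 2) = ∅ := by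
        apply Finset.Ioc_eq_empty; omega
      have he2 : Ioc s (m - 1) = ∅ := by
        apply Finset.Ioc_eq_empty; omega
      rw [he1, he2, sum_empty, sum_empty, Real.sqrt_zero, div_zero]
  · -- (3)
    rcases Nat.lt_or_ge M 2 with hM2 | hM2
    · have hM1 : M = 1 := by omega
      rw [hM1]
      exact le_trans (by norm_num) (le_max_right _ _)
    · refine le_trans ?_ (le_max_left _ _)
      set K := M - 1 with hKdef
      have hK1 : 1 ≤ K := by omega
      have hKM : K < M := by omega
      set V : ℕ → ℝ := fun i => ∑ k ∈ Ioc (r i) (r (i + 1)), |θ (k + 1) - θ k| with hV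
      set P : ℕ → ℝ := fun i => ∑ k ∈ Ioc (r i) (r (i + 1) + 1), (p k : ℝ) with hP
      have hVnn : ∀ i, 0 ≤ V i := fun i => Finset.sum_nonneg fun k _ => abs_nonneg _
      have hPnn : ∀ i, 0 ≤ P i := fun i => Finset.sum_nonneg fun k _ => by positivity
      have hPpos : ∀ i, i < K → 0 < P i := by
        intro i hi
        have h1 : r i < m := hlt i (by omega)
        have h2 : r i < r (i + 1) := ff_lt_succ θ B p m hB.le h1
        have hmem : r i + 1 ∈ Ioc (r i) (r (i + 1) + 1) := by simp only [mem_Ioc]; omega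
        have hpc : (1 : ℝ) ≤ (p (r i + 1) : ℝ) := by
          exact_mod_cast hp _ (by omega) (by omega)
        have hle := Finset.single_le_sum (f := fun k => (p k : ℝ))
          (fun k _ => by positivity) hmem
        simp only [hP]
        linarith
      have hfail : ∀ i, i < K → B < V i * Real.sqrt (P i) := by
        intro i hi
        have h1 : r i < m := hlt i (by omega)
        have h2 : r (i + 1) < m := hlt (i + 1) (by omega)
        have heq : r (i + 1) = goodEnd θ B p m (r i) := ff_succ_eq θ B p m h1
        have hng : ¬ GoodB θ B p (r i) (r (i + 1) + 1) :=
          goodEnd_max θ B p m hB.le h1 (by omega) (by omega)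
        unfold GoodB at hng
        push_neg at hng
        rw [Nat.add_sub_cancel] at hng
        have hs : 0 < Real.sqrt (P i) := Real.sqrt_pos.mpr (hPpos i hi)
        have hng' : B / Real.sqrt (P i) < V i := hng
        calc B = B / Real.sqrt (P i) * Real.sqrt (P i) := by field_simp
          _ < V i * Real.sqrt (P i) := by exact mul_lt_mul_of_pos_right hng' hs
      have htel : ∀ (g : ℕ → ℝ) (j : ℕ),
          ∑ i ∈ range j, (∑ k ∈ Ioc (r i) (r (i + 1)), g k) = ∑ k ∈ Ioc 0 (r j), g k := by
        intro g j
        induction j with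
        | zero =>
          have h0 : r 0 = 0 := ff_zero θ B p m
          rw [h0]
          simp
        | succ j ih =>
          rw [Finset.sum_range_succ, ih]
          exact Finset.sum_Ioc_consecutive g (Nat.zero_le _)
            (ff_mono θ B p m hB.le (Nat.le_succ j))
      have hIcc : Finset.Icc 1 (m - 1) = Finset.Ioc 0 (m - 1) := by
        rw [← Finset.Icc_add_one_left_eq_Ioc, zero_add]
      have hVC : ∑ i ∈ range K, V i ≤ C := by
        have h1 : ∑ i ∈ range K, V i = ∑ k ∈ Ioc 0 (r K), |θ (k + 1) - θ k| := htel _ K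
        have h2 : r K ≤ m - 1 := by have := hlt K hKM; omega
        rw [h1, hC, hIcc]
        apply Finset.sum_le_sum_of_subset_of_nonneg (Finset.Ioc_subset_Ioc_right h2)
        intro k _ _; positivity
      have hpnR : (∑ k ∈ Ioc 0 m, (p k : ℝ)) ≤ (n : ℝ) := by
        have : Finset.Icc 1 m = Finset.Ioc 0 m := by rw [← Finset.Icc_add_one_left_eq_Ioc, zero_add]
        rw [← this]
        calc (∑ k ∈ Finset.Icc 1 m, (p k : ℝ)) = ((∑ k ∈ Finset.Icc 1 m, p k : ℕ) : ℝ) := by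
              push_cast; ring
          _ ≤ (n : ℝ) := by exact_mod_cast hpn
      have hPsum : ∑ i ∈ range K, P i ≤ 2 * (n : ℝ) := by
        have hsplit : ∀ i ∈ range K,
            P i = (∑ k ∈ Ioc (r i) (r (i + 1)), (p k : ℝ)) + (p (r (i + 1) + 1) : ℝ) := by
          intro i hi
          have hi' : i < K := Finset.mem_range.mp hi
          simp only [hP]
          rw [Finset.sum_Ioc_succ_top
            (le_of_lt (ff_lt_succ θ B p m hB.le (hlt i (by omega))))]
        rw [Finset.sum_congr rfl hsplit, Finset.sum_add_distrib]
        have hfirst : ∑ i ∈ range K, (∑ k ∈ Ioc (r i) (r (i + 1)), (p k : ℝ)) ≤ (n : ℝ) := by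
          rw [htel]
          refine le_trans (Finset.sum_le_sum_of_subset_of_nonneg
            (Finset.Ioc_subset_Ioc_right (ff_le θ B p m K)) ?_) hpnR
          intro k _ _; positivity
        have hsecond : ∑ i ∈ range K, (p (r (i + 1) + 1) : ℝ) ≤ (n : ℝ) := by
          have hinj : ∀ a ∈ range K, ∀ b ∈ range K,
              r (a + 1) + 1 = r (b + 1) + 1 → a = b := by
            intro a ha b hb hab
            have ha' := Finset.mem_range.mp ha
            have hb' := Finset.mem_range.mp hb
            by_contra hne
            rcases Nat.lt_or_ge a b with h | h
            · have hcmp : r (a + 1) < r (b + 1) := ff_lt_of_lt θ B p m hB.le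
                (show a + 1 < b + 1 by omega) (fun k hk => hlt k (by omega))
              omega
            · have hcmp : r (b + 1) < r (a + 1) := ff_lt_of_lt θ B p m hB.le
                (show b + 1 < a + 1 by omega) (fun k hk => hlt k (by omega))
              omega
          rw [← Finset.sum_image (f := fun k => (p k : ℝ)) (g := fun i => r (i + 1) + 1) hinj]
          refine le_trans (Finset.sum_le_sum_of_subset_of_nonneg ?_ ?_) hpnR
          · intro k hk
            simp only [Finset.mem_image, Finset.mem_range] at hk
            obtain ⟨i, hi, rfl⟩ := hk
            have : r (i + 1) < m := hlt (i + 1) (by omega)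
            simp only [Finset.mem_Ioc]
            omega
          · intro k _ _; positivity
        linarith
      -- positivity of C and n
      have hV0 : 0 < V 0 := by
        have h0 := hfail 0 (by omega)
        nlinarith [Real.sqrt_nonneg (P 0), hVnn 0]
      have hC0 : 0 < C := by
        have h1 : V 0 ≤ ∑ i ∈ range K, V i :=
          Finset.single_le_sum (fun i _ => hVnn i) (Finset.mem_range.mpr (by omega))
        linarith
      have hn0 : 0 < n := by
        have h1 : 0 < p 1 := hp 1 le_rfl hm
        have h2 : p 1 ≤ ∑ k ∈ Finset.Icc 1 m, p k :=
          Finset.single_le_sum (f := fun k => p k) (fun k _ => Nat.zero_le _)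
            (Finset.mem_Icc.mpr ⟨le_rfl, hm⟩)
        omega
      have hn0' : (0 : ℝ) < (n : ℝ) := by exact_mod_cast hn0
      have h2n : (0 : ℝ) < 2 * (n : ℝ) := by linarith
      -- AM-GM step
      set t : ℝ := (2 * (n : ℝ)) ^ ((1 : ℝ) / 3) / C ^ ((1 : ℝ) / 3) with htdef
      have ht : 0 < t := div_pos (Real.rpow_pos_of_pos h2n _) (Real.rpow_pos_of_pos hC0 _)
      have ht23 : (t ^ 2) ^ ((1 : ℝ) / 3) = t ^ ((2 : ℝ) / 3) := by
        rw [← Real.rpow_natCast t 2, ← Real.rpow_mul ht.le]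
        norm_num
      have hkey : ∀ i, i < K →
          B ^ ((2 : ℝ) / 3) ≤ 2 / 3 * (t * V i) + 1 / 3 * (P i / t ^ 2) := by
        intro i hi
        have hPi := hPpos i hi
        have hfa := hfail i hi
        have hVi : 0 < V i := by nlinarith [Real.sqrt_nonneg (P i), hVnn i]
        have hstep1 : B ^ ((2 : ℝ) / 3) ≤ (V i * Real.sqrt (P i)) ^ ((2 : ℝ) / 3) :=
          Real.rpow_le_rpow hB.le hfa.le (by norm_num)
        have hstep2 : (V i * Real.sqrt (P i)) ^ ((2 : ℝ) / 3)
            = V i ^ ((2 : ℝ) / 3) * P i ^ ((1 : ℝ) / 3) := by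
          rw [Real.mul_rpow hVi.le (Real.sqrt_nonneg _), Real.sqrt_eq_rpow,
            ← Real.rpow_mul hPi.le]
          norm_num
        have hstep3 : V i ^ ((2 : ℝ) / 3) * P i ^ ((1 : ℝ) / 3)
            = (t * V i) ^ ((2 : ℝ) / 3) * (P i / t ^ 2) ^ ((1 : ℝ) / 3) := by
          rw [Real.mul_rpow ht.le hVi.le, Real.div_rpow (hPnn i) (by positivity), ht23]
          have htne : t ^ ((2 : ℝ) / 3) ≠ 0 := ne_of_gt (Real.rpow_pos_of_pos ht _)
          field_simp
        have hstep4 : (t * V i) ^ ((2 : ℝ) / 3) * (P i / t ^ 2) ^ ((1 : ℝ) / 3)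
            ≤ 2 / 3 * (t * V i) + 1 / 3 * (P i / t ^ 2) :=
          Real.geom_mean_le_arith_mean2_weighted (by norm_num) (by norm_num)
            (by positivity) (by positivity) (by norm_num)
        calc B ^ ((2 : ℝ) / 3) ≤ (V i * Real.sqrt (P i)) ^ ((2 : ℝ) / 3) := hstep1
          _ = V i ^ ((2 : ℝ) / 3) * P i ^ ((1 : ℝ) / 3) := hstep2
          _ = (t * V i) ^ ((2 : ℝ) / 3) * (P i / t ^ 2) ^ ((1 : ℝ) / 3) := hstep3
          _ ≤ _ := hstep4
      have hsum : (K : ℝ) * B ^ ((2 : ℝ) / 3)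
          ≤ 2 / 3 * (t * C) + 1 / 3 * (2 * (n : ℝ) / t ^ 2) := by
        have h1 : (K : ℝ) * B ^ ((2 : ℝ) / 3) = ∑ _i ∈ range K, B ^ ((2 : ℝ) / 3) := by
          rw [Finset.sum_const, Finset.card_range, nsmul_eq_mul]
        rw [h1]
        calc ∑ _i ∈ range K, B ^ ((2 : ℝ) / 3)
            ≤ ∑ i ∈ range K, (2 / 3 * (t * V i) + 1 / 3 * (P i / t ^ 2)) :=
              Finset.sum_le_sum (fun i hi => hkey i (Finset.mem_range.mp hi))
          _ = 2 / 3 * (t * ∑ i ∈ range K, V i)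
              + 1 / 3 * ((∑ i ∈ range K, P i) / t ^ 2) := by
              rw [Finset.sum_add_distrib, ← Finset.mul_sum, ← Finset.mul_sum,
                Finset.sum_div, ← Finset.mul_sum]
          _ ≤ _ := by
              have hA1 : t * (∑ i ∈ range K, V i) ≤ t * C :=
                mul_le_mul_of_nonneg_left hVC ht.le
              have ht2 : (0 : ℝ) < t ^ 2 := by positivity
              have hA2 : (∑ i ∈ range K, P i) / t ^ 2 ≤ 2 * (n : ℝ) / t ^ 2 :=
                (div_le_div_iff_of_pos_right ht2).mpr hPsum
              linarith
      have hval : 2 / 3 * (t * C) + 1 / 3 * (2 * (n : ℝ) / t ^ 2)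
          = (2 * (n : ℝ)) ^ ((1 : ℝ) / 3) * C ^ ((2 : ℝ) / 3) := by
        have hApos : (0 : ℝ) < (2 * (n : ℝ)) ^ ((1 : ℝ) / 3) := Real.rpow_pos_of_pos h2n _
        have hDpos : (0 : ℝ) < C ^ ((1 : ℝ) / 3) := Real.rpow_pos_of_pos hC0 _
        have hA3 : ((2 * (n : ℝ)) ^ ((1 : ℝ) / 3)) ^ (3 : ℕ) = 2 * (n : ℝ) := by
          rw [← Real.rpow_natCast ((2 * (n : ℝ)) ^ ((1 : ℝ) / 3)) 3, ← Real.rpow_mul h2n.le]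
          norm_num
        have hC3 : (C ^ ((1 : ℝ) / 3)) ^ (3 : ℕ) = C := by
          rw [← Real.rpow_natCast (C ^ ((1 : ℝ) / 3)) 3, ← Real.rpow_mul hC0.le]
          norm_num
        have hC2 : C ^ ((2 : ℝ) / 3) = (C ^ ((1 : ℝ) / 3)) ^ (2 : ℕ) := by
          rw [← Real.rpow_natCast (C ^ ((1 : ℝ) / 3)) 2, ← Real.rpow_mul hC0.le]
          norm_num
        rw [htdef, hC2]
        set A := (2 * (n : ℝ)) ^ ((1 : ℝ) / 3) with hAdef
        set D := C ^ ((1 : ℝ) / 3) with hDdef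
        have hAne : A ≠ 0 := ne_of_gt hApos
        have hDne : D ≠ 0 := ne_of_gt hDpos
        rw [← hC3, ← hA3]
        field_simp
        ring
      have hB23 : (0 : ℝ) < B ^ ((2 : ℝ) / 3) := Real.rpow_pos_of_pos hB _
      have hKle : (K : ℝ)
          ≤ (2 * (n : ℝ)) ^ ((1 : ℝ) / 3) * C ^ ((2 : ℝ) / 3) / B ^ ((2 : ℝ) / 3) := by
        rw [le_div_iff₀ hB23]
        calc (K : ℝ) * B ^ ((2 : ℝ) / 3) ≤ _ := hsum
          _ = _ := hval
      have hMK : (M : ℝ) ≤ 2 * (K : ℝ) := by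
        have h1 : M = K + 1 := by omega
        have h2 : (1 : ℝ) ≤ (K : ℝ) := by exact_mod_cast hK1
        rw [h1]; push_cast; linarith
      have hsplit2 : (2 * (n : ℝ)) ^ ((1 : ℝ) / 3)
          = 2 ^ ((1 : ℝ) / 3) * (n : ℝ) ^ ((1 : ℝ) / 3) :=
        Real.mul_rpow (by norm_num) (Nat.cast_nonneg n)
      have hBneg : B ^ (-(2 : ℝ) / 3) = (B ^ ((2 : ℝ) / 3))⁻¹ := by
        rw [show -(2 : ℝ) / 3 = -((2 : ℝ) / 3) by ring, Real.rpow_neg hB.le]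
      have h213 : (2 : ℝ) ^ ((1 : ℝ) / 3) ≤ 3 / 2 := by
        have h1 : ((27 : ℝ) / 8) ^ ((1 : ℝ) / 3) = 3 / 2 := by
          rw [show (27 : ℝ) / 8 = ((3 : ℝ) / 2) ^ (3 : ℕ) by norm_num,
            ← Real.rpow_natCast ((3 : ℝ) / 2) 3, ← Real.rpow_mul (by norm_num)]
          norm_num
        have h2 : (2 : ℝ) ^ ((1 : ℝ) / 3) ≤ ((27 : ℝ) / 8) ^ ((1 : ℝ) / 3) :=
          Real.rpow_le_rpow (by norm_num) (by norm_num) (by norm_num)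
        linarith
      have hZ : (0 : ℝ)
          ≤ (n : ℝ) ^ ((1 : ℝ) / 3) * C ^ ((2 : ℝ) / 3) * (B ^ ((2 : ℝ) / 3))⁻¹ := by
        positivity
      calc (M : ℝ) ≤ 2 * (K : ℝ) := hMK
        _ ≤ 2 * ((2 * (n : ℝ)) ^ ((1 : ℝ) / 3) * C ^ ((2 : ℝ) / 3) / B ^ ((2 : ℝ) / 3)) := by
            linarith
        _ = 2 * 2 ^ ((1 : ℝ) / 3)
            * ((n : ℝ) ^ ((1 : ℝ) / 3) * C ^ ((2 : ℝ) / 3) * (B ^ ((2 : ℝ) / 3))⁻¹) := by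
            rw [hsplit2, div_eq_mul_inv]; ring
        _ ≤ 3 * ((n : ℝ) ^ ((1 : ℝ) / 3) * C ^ ((2 : ℝ) / 3) * (B ^ ((2 : ℝ) / 3))⁻¹) :=
            two_cbrt_le hZ
        _ = 3 * (n : ℝ) ^ ((1 : ℝ) / 3) * C ^ ((2 : ℝ) / 3) * B ^ (-(2 : ℝ) / 3) := by
            rw [hBneg]; ring
end

section
/- In the sleeping experts setting with mix-loss, the regret of the Specialist Aggregation Algorithm against any expert j over its awake rounds equals log(u_{1,j}⁻¹) minus log of the final relative weight term, and in particular is bounded by −log u_{1,j}; with uniform prior u_{1,j} = 1/K this gives regret at most log K, and with the expert pool E of size at most n log₂ n (one averaging expert per geometric cover interval contained in [n]) the regret is at most log(n log₂ n). -/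
open Finset

/-- Mix-loss regret of the Specialist Aggregation Algorithm against expert `j`
over its awake rounds equals `log (u_{1,j}⁻¹) - log (u_{n+1,j}⁻¹)` (the initial
log-inverse-weight minus the log of the final relative weight term), hence is
at most `-log u_{1,j}`; with the uniform prior `u_{1,j} = 1/K` this is at most
`log K`, and for a pool of size `K ≤ n log₂ n` (one averaging expert per
geometric-cover interval contained in `[n]`) it is at most `log (n log₂ n)`. -/
theorem stmt16 (K n : ℕ) (hK : 0 < K)
    (A : ℕ → Finset (Fin K)) (hA : ∀ t, (A t).Nonempty)
    (ℓ : ℕ → Fin K → ℝ)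
    (u w : ℕ → Fin K → ℝ)
    (hu1pos : ∀ k, 0 < u 1 k) (hu1sum : ∑ k, u 1 k = 1)
    (hw : ∀ t k, w t k = if k ∈ A t then u t k / ∑ i ∈ A t, u t i else 0)
    (hupd : ∀ t k, k ∈ A t →
      u (t + 1) k = u t k * Real.exp (-ℓ t k) * (∑ i ∈ A t, u t i)
        / ∑ i ∈ A t, u t i * Real.exp (-ℓ t i))
    (hfreeze : ∀ t k, k ∉ A t → u (t + 1) k = u t k)
    (j : Fin K) :
    (∑ t ∈ Finset.Icc 1 n,
        (if j ∈ A t then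
          -Real.log (∑ k ∈ A t, w t k * Real.exp (-ℓ t k)) - ℓ t j
        else 0)
      = Real.log (1 / u 1 j) - Real.log (1 / u (n + 1) j)) ∧
    (∑ t ∈ Finset.Icc 1 n,
        (if j ∈ A t then
          -Real.log (∑ k ∈ A t, w t k * Real.exp (-ℓ t k)) - ℓ t j
        else 0)
      ≤ -Real.log (u 1 j)) ∧
    ((∀ k, u 1 k = 1 / K) →
      ∑ t ∈ Finset.Icc 1 n,
        (if j ∈ A t then
          -Real.log (∑ k ∈ A t, w t k * Real.exp (-ℓ t k)) - ℓ t j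
        else 0)
      ≤ Real.log K) ∧
    ((∀ k, u 1 k = 1 / K) → (K : ℝ) ≤ n * Real.logb 2 n →
      ∑ t ∈ Finset.Icc 1 n,
        (if j ∈ A t then
          -Real.log (∑ k ∈ A t, w t k * Real.exp (-ℓ t k)) - ℓ t j
        else 0)
      ≤ Real.log ((n : ℝ) * Real.logb 2 n)) := by

  -- positivity and unit-sum invariant for all t ≥ 1
  have key : ∀ m : ℕ, (∀ k, 0 < u (m + 1) k) ∧ (∑ k, u (m + 1) k = 1) := by
    intro m
    induction m with
    | zero => exact ⟨hu1pos, hu1sum⟩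
    | succ t ih =>
      obtain ⟨hpos, hsum⟩ := ih
      set s := t + 1 with hs
      have hS : 0 < ∑ i ∈ A s, u s i :=
        Finset.sum_pos (fun i _ => hpos i) (hA s)
      have hT : 0 < ∑ i ∈ A s, u s i * Real.exp (-ℓ s i) :=
        Finset.sum_pos (fun i _ => mul_pos (hpos i) (Real.exp_pos _)) (hA s)
      have hpos' : ∀ k, 0 < u (s + 1) k := by
        intro k
        by_cases hk : k ∈ A s
        · rw [hupd s k hk]
          exact div_pos (mul_pos (mul_pos (hpos k) (Real.exp_pos _)) hS) hT
        · rw [hfreeze s k hk]; exact hpos k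
      refine ⟨hpos', ?_⟩
      have hsplit : ∀ v : Fin K → ℝ, ∑ k, v k = ∑ k ∈ A s, v k + ∑ k ∈ (A s)ᶜ, v k := by
        intro v
        rw [← Finset.sum_add_sum_compl (A s) v]
      rw [hsplit]
      have h1 : ∑ k ∈ A s, u (s + 1) k = ∑ k ∈ A s, u s k := by
        rw [Finset.sum_congr rfl (fun k hk => hupd s k hk)]
        rw [← Finset.sum_div]
        have : ∑ i ∈ A s, u s i * Real.exp (-ℓ s i) * (∑ i ∈ A s, u s i)
            = (∑ i ∈ A s, u s i * Real.exp (-ℓ s i)) * (∑ i ∈ A s, u s i) := by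
          rw [Finset.sum_mul]
        rw [this, mul_comm, mul_div_assoc, div_self hT.ne', mul_one]
      have h2 : ∑ k ∈ (A s)ᶜ, u (s + 1) k = ∑ k ∈ (A s)ᶜ, u s k :=
        Finset.sum_congr rfl (fun k hk => hfreeze s k (Finset.mem_compl.mp hk))
      rw [h1, h2, ← hsplit]; exact hsum
  have hpos : ∀ t, 1 ≤ t → ∀ k, 0 < u t k := by
    intro t ht k
    obtain ⟨m, rfl⟩ := Nat.exists_eq_add_of_le ht
    rw [add_comm]
    exact (key m).1 k
  -- per-round identity
  have hterm : ∀ t, 1 ≤ t →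
      (if j ∈ A t then
          -Real.log (∑ k ∈ A t, w t k * Real.exp (-ℓ t k)) - ℓ t j
        else 0) = Real.log (u (t + 1) j) - Real.log (u t j) := by
    intro t ht
    have hpt := hpos t ht
    have hS : 0 < ∑ i ∈ A t, u t i :=
      Finset.sum_pos (fun i _ => hpt i) (hA t)
    have hT : 0 < ∑ i ∈ A t, u t i * Real.exp (-ℓ t i) :=
      Finset.sum_pos (fun i _ => mul_pos (hpt i) (Real.exp_pos _)) (hA t)
    by_cases hj : j ∈ A t
    · rw [if_pos hj, hupd t j hj]
      have hwsum : ∑ k ∈ A t, w t k * Real.exp (-ℓ t k)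
          = (∑ i ∈ A t, u t i * Real.exp (-ℓ t i)) / (∑ i ∈ A t, u t i) := by
        rw [Finset.sum_congr rfl (fun k hk => by
          rw [hw t k, if_pos hk, div_mul_eq_mul_div]), ← Finset.sum_div]
      rw [hwsum, Real.log_div hT.ne' hS.ne',
        Real.log_div (mul_pos (mul_pos (hpt j) (Real.exp_pos _)) hS).ne' hT.ne',
        Real.log_mul (mul_pos (hpt j) (Real.exp_pos _)).ne' hS.ne',
        Real.log_mul (hpt j).ne' (Real.exp_ne_zero _), Real.log_exp]
      ring
    · rw [if_neg hj, hfreeze t j hj]; ring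
  -- telescoping
  have hmain : ∑ t ∈ Finset.Icc 1 n,
        (if j ∈ A t then
          -Real.log (∑ k ∈ A t, w t k * Real.exp (-ℓ t k)) - ℓ t j
        else 0) = Real.log (u (n + 1) j) - Real.log (u 1 j) := by
    rw [Finset.sum_congr rfl (fun t ht => hterm t (Finset.mem_Icc.mp ht).1)]
    induction n with
    | zero => simp
    | succ m ih =>
      rw [Finset.sum_Icc_succ_top (by omega : 1 ≤ m + 1), ih]
      ring
  have hun1 : 0 < u (n + 1) j := hpos (n + 1) (by omega) j
  have hun1le : u (n + 1) j ≤ 1 := by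
    have := Finset.single_le_sum (f := u (n + 1))
      (fun k _ => ((key n).1 k).le) (Finset.mem_univ j)
    rw [(key n).2] at this; exact this
  have h1 : Real.log (1 / u 1 j) - Real.log (1 / u (n + 1) j)
      = Real.log (u (n + 1) j) - Real.log (u 1 j) := by
    rw [Real.log_div one_ne_zero (hu1pos j).ne',
      Real.log_div one_ne_zero hun1.ne', Real.log_one]
    ring
  have heq := hmain.trans h1.symm
  have hle : ∑ t ∈ Finset.Icc 1 n,
        (if j ∈ A t then
          -Real.log (∑ k ∈ A t, w t k * Real.exp (-ℓ t k)) - ℓ t j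
        else 0) ≤ -Real.log (u 1 j) := by
    rw [hmain]
    have : Real.log (u (n + 1) j) ≤ 0 := Real.log_nonpos hun1.le hun1le
    linarith
  refine ⟨heq, hle, ?_, ?_⟩
  · intro huni
    have : -Real.log (u 1 j) = Real.log K := by
      rw [huni j, Real.log_div one_ne_zero (by positivity), Real.log_one]
      ring
    linarith [hle]
  · intro huni hKn
    have h2 : -Real.log (u 1 j) = Real.log K := by
      rw [huni j, Real.log_div one_ne_zero (by positivity), Real.log_one]
      ring
    have h3 : Real.log (K : ℝ) ≤ Real.log ((n : ℝ) * Real.logb 2 n) :=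
      Real.log_le_log (by exact_mod_cast hK) hKn
    linarith [hle]
end
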